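/- arXiv:2512.09774 — 2 statements merged into one kernel-verified Lean document; each statement's English description precedes it below -/
import Mathlib

section
/- Let A : ℝ² → ℝ² be an invertible real affine transformation. If there exist round circles C₁ and C₂ in the plane such that A(C₁) = C₂, then A is a similarity transformation (i.e., there is k > 0 with dist(A x, A y) = k · dist(x, y) for all x, y). -/
lemma sphere_center_unique {E : Type*} [NormedAddCommGroup E] [NormedSpace ℝ E]
    {a b : E} {r : ℝ} (hr : 0 < r) (h : Metric.sphere a r = Metric.sphere b r) :
    a = b := by
  by_contra hab
  have hd0 : 0 < ‖a - b‖ := by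
    rw [norm_pos_iff, sub_ne_zero]; exact hab
  set d := ‖a - b‖ with hd
  set p := a + (r / d) • (a - b) with hp
  have h1 : p ∈ Metric.sphere a r := by
    simp only [Metric.mem_sphere, dist_eq_norm, hp]
    rw [add_sub_cancel_left, norm_smul, Real.norm_eq_abs,
      abs_of_pos (div_pos hr hd0), ← hd, div_mul_cancel₀ _ (ne_of_gt hd0)]
  have h2 : dist p b = d + r := by
    have : p - b = (1 + r / d) • (a - b) := by
      rw [hp]; module
    rw [dist_eq_norm, this, norm_smul, Real.norm_eq_abs,
      abs_of_pos (by positivity), ← hd]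
    field_simp
  rw [h] at h1
  rw [Metric.mem_sphere, h2] at h1
  linarith

theorem affine_circle_to_circle
    (T : EuclideanSpace ℝ (Fin 2) ≃ₗ[ℝ] EuclideanSpace ℝ (Fin 2))
    (w : EuclideanSpace ℝ (Fin 2))
    (A : EuclideanSpace ℝ (Fin 2) → EuclideanSpace ℝ (Fin 2))
    (hA : ∀ v, A v = T v + w)
    (c₁ c₂ : EuclideanSpace ℝ (Fin 2)) (r₁ r₂ : ℝ)
    (hr₁ : 0 < r₁) (hr₂ : 0 < r₂)
    (him : A '' Metric.sphere c₁ r₁ = Metric.sphere c₂ r₂) :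
    ∃ k > 0, ∀ x y, dist (A x) (A y) = k * dist x y := by
  set c' : EuclideanSpace ℝ (Fin 2) := c₂ - (T c₁ + w) with hc'
  -- membership reformulation: ‖u‖ = r₁ → T u ∈ sphere c' r₂, and conversely
  have key : ∀ u : EuclideanSpace ℝ (Fin 2), ‖u‖ = r₁ → T u ∈ Metric.sphere c' r₂ := by
    intro u hu
    have hmem : c₁ + u ∈ Metric.sphere c₁ r₁ := by
      simp [Metric.mem_sphere, dist_eq_norm, hu]
    have : A (c₁ + u) ∈ Metric.sphere c₂ r₂ := by
      rw [← him]; exact Set.mem_image_of_mem _ hmem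
    rw [hA, map_add] at this
    rw [Metric.mem_sphere, dist_eq_norm] at this ⊢
    rw [hc']
    convert this using 2
    abel
  have key' : ∀ v : EuclideanSpace ℝ (Fin 2), v ∈ Metric.sphere c' r₂ →
      ∃ u, ‖u‖ = r₁ ∧ T u = v := by
    intro v hv
    have hv' : v + (T c₁ + w) ∈ Metric.sphere c₂ r₂ := by
      rw [Metric.mem_sphere, dist_eq_norm] at hv ⊢
      rw [hc'] at hv
      convert hv using 2
      abel
    rw [← him] at hv'
    obtain ⟨x, hx, hxe⟩ := hv'
    refine ⟨x - c₁, ?_, ?_⟩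
    · rw [Metric.mem_sphere, dist_eq_norm] at hx; exact hx
    · rw [hA] at hxe
      rw [map_sub]
      linear_combination (norm := module) hxe
  -- symmetry: c' = 0
  have hc0 : c' = 0 := by
    -- sphere (-c') r₂ = sphere c' r₂
    have hsym : Metric.sphere (-c') r₂ = Metric.sphere c' r₂ := by
      ext v
      simp only [Metric.mem_sphere, dist_eq_norm]
      constructor
      · intro hv
        -- -v ∈ sphere c'
        have hnv : -v ∈ Metric.sphere c' r₂ := by
          rw [Metric.mem_sphere, dist_eq_norm]
          rw [← norm_neg]; convert hv using 2; rfl; abel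
        obtain ⟨u, hu, hTu⟩ := key' _ hnv
        have := key (-u) (by rwa [norm_neg])
        rw [map_neg, hTu, Metric.mem_sphere, dist_eq_norm] at this
        convert this using 2; abel
      · intro hv
        have hnv : -v ∈ Metric.sphere c' r₂ := by
          obtain ⟨u, hu, hTu⟩ := key' v (by rwa [Metric.mem_sphere, dist_eq_norm])
          have := key (-u) (by rwa [norm_neg])
          rwa [map_neg, hTu] at this
        rw [Metric.mem_sphere, dist_eq_norm] at hnv
        rw [← norm_neg]; convert hnv using 2; rfl; abel
    have := sphere_center_unique hr₂ hsym
    have h2 : (2 : ℝ) • c' = 0 := by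
      have : c' + c' = 0 := by linear_combination (norm := module) -this
      rw [two_smul]; exact this
    have := smul_eq_zero.mp h2
    rcases this with h | h
    · norm_num at h
    · exact h
  -- norm scaling
  have hnorm : ∀ v : EuclideanSpace ℝ (Fin 2), ‖T v‖ = (r₂ / r₁) * ‖v‖ := by
    intro v
    rcases eq_or_ne v 0 with rfl | hv
    · simp
    · have hnv : 0 < ‖v‖ := norm_pos_iff.mpr hv
      have hu : ‖(r₁ / ‖v‖) • v‖ = r₁ := by
        rw [norm_smul, Real.norm_eq_abs, abs_of_pos (div_pos hr₁ hnv),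
          div_mul_cancel₀ _ (ne_of_gt hnv)]
      have := key _ hu
      rw [hc0, Metric.mem_sphere, dist_zero_right, map_smul, norm_smul,
        Real.norm_eq_abs, abs_of_pos (div_pos hr₁ hnv)] at this
      field_simp at this ⊢
      linarith
  refine ⟨r₂ / r₁, div_pos hr₂ hr₁, fun x y => ?_⟩
  rw [hA, hA, dist_eq_norm]
  have : (T x : EuclideanSpace ℝ (Fin 2)) + w - (T y + w) = T (x - y) := by
    rw [map_sub]; abel
  rw [this, hnorm, dist_eq_norm]
end

section
/- Let f : [0,1] → ℝ be continuous, and let A ⊆ [0,1] be the set of points where f is differentiable with derivative zero. Then f(A) is a Lebesgue-null subset of ℝ. -/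
open Set MeasureTheory

theorem image_zero_derivative_null (f : ℝ → ℝ) (hf : ContinuousOn f (Icc (0:ℝ) 1)) :
    volume (f '' {x : ℝ | x ∈ Icc (0:ℝ) 1 ∧ HasDerivWithinAt f 0 (Icc (0:ℝ) 1) x}) = 0 := by
  set s : Set ℝ := {x : ℝ | x ∈ Icc (0:ℝ) 1 ∧ HasDerivWithinAt f 0 (Icc (0:ℝ) 1) x}
  have h1 : f '' s ⊆ f '' s := subset_rfl
  have := addHaar_image_eq_zero_of_det_fderivWithin_eq_zero (μ := volume)
    (f := f) (s := s) (f' := fun _ => (0 : ℝ →L[ℝ] ℝ))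
    (fun x hx => by
      have := hx.2.hasFDerivWithinAt
      have h2 := this.mono (show s ⊆ Icc (0:ℝ) 1 from fun y hy => hy.1)
      rw [show (ContinuousLinearMap.toSpanSingleton ℝ (0:ℝ)) = (0 : ℝ →L[ℝ] ℝ) from by ext y; simp] at h2
      exact h2)
    (fun x _ => by simp [ContinuousLinearMap.det])
  exact this
end
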